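/- Let G = P_s □ P_t be a grid graph with s ≥ t ≥ 2, and let k be an integer with 2 ≤ k ≤ s. Then the set S = {u_1, ..., u_k} × {v_1, v_t}, of size 2k, is a k-resolving set for G. -/

import Mathlib

open SimpleGraph


lemma path_walk (n : ℕ) : ∀ m (i j : Fin n), Nat.dist i.1 j.1 = m →
    ∃ p : (SimpleGraph.pathGraph n).Walk i j, p.length = m := by
  intro m
  induction m with
  | zero =>
    intro i j h
    have : i = j := Fin.ext (Nat.eq_of_dist_eq_zero h)
    subst this
    exact ⟨.nil, rfl⟩
  | succ m ih =>
    intro i j h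
    rcases lt_or_gt_of_ne (show i.1 ≠ j.1 by simp [Nat.dist] at h ⊢; omega) with hlt | hgt
    · have hi' : i.1 + 1 < n := lt_of_le_of_lt hlt j.2
      obtain ⟨p, hp⟩ := ih ⟨i.1 + 1, hi'⟩ j (by simp [Nat.dist] at h ⊢; omega)
      exact ⟨.cons (by rw [pathGraph_adj]; left; rfl) p, by simp [hp]⟩
    · have hi' : i.1 - 1 < n := by omega
      obtain ⟨p, hp⟩ := ih ⟨i.1 - 1, hi'⟩ j (by simp [Nat.dist] at h ⊢; omega)
      exact ⟨.cons (by rw [pathGraph_adj]; right; simp; omega) p, by simp [hp]⟩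

lemma walk_lip {V : Type*} {G : SimpleGraph V} (φ : V → ℕ)
    (hφ : ∀ x y, G.Adj x y → φ x ≤ φ y + 1) :
    ∀ {u v : V} (p : G.Walk u v), φ u ≤ φ v + p.length := by
  intro u v p
  induction p with
  | nil => simp
  | @cons u x v h q ih =>
    calc φ u ≤ φ x + 1 := hφ u x h
    _ ≤ φ v + q.length + 1 := by omega
    _ = φ v + (SimpleGraph.Walk.cons h q).length := by simp [SimpleGraph.Walk.length_cons]; omega

lemma grid_dist (s t : ℕ) (hs : 1 ≤ s) (ht : 1 ≤ t) (a c : Fin s) (b d : Fin t) :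
    ((SimpleGraph.pathGraph s).boxProd (SimpleGraph.pathGraph t)).dist (a, b) (c, d)
      = Nat.dist a.1 c.1 + Nat.dist b.1 d.1 := by
  apply le_antisymm
  · obtain ⟨p1, hp1⟩ := path_walk s (Nat.dist a.1 c.1) a c rfl
    obtain ⟨p2, hp2⟩ := path_walk t (Nat.dist b.1 d.1) b d rfl
    refine le_trans (SimpleGraph.dist_le ((p1.boxProdLeft (SimpleGraph.pathGraph t) b).append
      (p2.boxProdRight (SimpleGraph.pathGraph s) c))) ?_
    rw [SimpleGraph.Walk.length_append]
    exact le_of_eq (congrArg₂ (· + ·) ((SimpleGraph.Walk.length_map _ p1).trans hp1)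
      ((SimpleGraph.Walk.length_map _ p2).trans hp2))
  · have hconn : ((SimpleGraph.pathGraph s).boxProd (SimpleGraph.pathGraph t)).Connected := by
      rw [SimpleGraph.connected_boxProd]
      constructor
      · obtain ⟨s', rfl⟩ : ∃ s', s = s' + 1 := ⟨s - 1, by omega⟩
        exact SimpleGraph.pathGraph_connected _
      · obtain ⟨t', rfl⟩ : ∃ t', t = t' + 1 := ⟨t - 1, by omega⟩
        exact SimpleGraph.pathGraph_connected _
    obtain ⟨p, hp⟩ := (hconn.preconnected (a, b) (c, d)).exists_walk_length_eq_dist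
    have := walk_lip (G := (SimpleGraph.pathGraph s).boxProd (SimpleGraph.pathGraph t))
      (fun x => Nat.dist x.1.1 c.1 + Nat.dist x.2.1 d.1) ?_ p
    · simpa [Nat.dist, hp] using this
    · rintro ⟨x1, x2⟩ ⟨y1, y2⟩ hadj
      rw [SimpleGraph.boxProd_adj] at hadj
      dsimp only at hadj
      rcases hadj with ⟨h1, h2⟩ | ⟨h1, h2⟩
      · rw [SimpleGraph.pathGraph_adj] at h1
        subst h2
        simp only [Nat.dist]
        omega
      · rw [SimpleGraph.pathGraph_adj] at h1
        subst h2
        simp only [Nat.dist]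
        omega



/-- A finset `S` of vertices is a `k`-resolving set for `G`: any two distinct vertices `u, w`
have different distances to at least `k` vertices of `S`. -/
def IsKResolvingSet {V : Type*} [DecidableEq V] (G : SimpleGraph V) (k : ℕ) (S : Finset V) : Prop :=
  ∀ u w : V, u ≠ w → k ≤ (S.filter (fun v => G.dist u v ≠ G.dist w v)).card

/-- In the grid graph `P_s □ P_t` with `s ≥ t ≥ 2`, for `2 ≤ k ≤ s`, the set
`S = {u₁, …, u_k} × {v₁, v_t}` has size `2k` and is a `k`-resolving set. -/
theorem grid_kResolvingSet_case_k_le_s (s t : ℕ) (ht : 2 ≤ t) (hts : t ≤ s)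
    (k : ℕ) (hk1 : 2 ≤ k) (hk2 : k ≤ s) :
    let S : Finset (Fin s × Fin t) :=
      (Finset.univ.filter (fun i : Fin s => (i : ℕ) < k)) ×ˢ
        ({⟨0, by omega⟩, ⟨t - 1, by omega⟩} : Finset (Fin t))
    S.card = 2 * k ∧
      IsKResolvingSet ((SimpleGraph.pathGraph s).boxProd (SimpleGraph.pathGraph t)) k S := by
  intro S
  set e0 : Fin t := ⟨0, by omega⟩ with he0
  set e1 : Fin t := ⟨t - 1, by omega⟩ with he1
  have hee : e0 ≠ e1 := by
    intro h
    have := congrArg Fin.val h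
    simp [he0, he1] at this
    omega
  set F : Finset (Fin s) := Finset.univ.filter (fun i : Fin s => (i : ℕ) < k) with hFdef
  have hSdef : S = F ×ˢ ({e0, e1} : Finset (Fin t)) := rfl
  have hF : F.card = k := by
    have : F = (Finset.range k).attachFin
        (fun m hm => lt_of_lt_of_le (Finset.mem_range.mp hm) hk2) := by
      ext i
      simp [hFdef, Finset.mem_attachFin]
    rw [this, Finset.card_attachFin, Finset.card_range]
  constructor
  · rw [hSdef, Finset.card_product, hF, Finset.card_insert_of_notMem (by simp [hee]),
      Finset.card_singleton]
    ring
  · intro u w huw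
    set G := (SimpleGraph.pathGraph s).boxProd (SimpleGraph.pathGraph t) with hG
    have hdist : ∀ (x y : Fin s × Fin t),
        G.dist x y = Nat.dist x.1.1 y.1.1 + Nat.dist x.2.1 y.2.1 := by
      intro x y
      exact grid_dist s t (by omega) (by omega) x.1 y.1 x.2 y.2
    set P : Fin s × Fin t → Prop := fun v => G.dist u v ≠ G.dist w v with hP
    have hsplit : (S.filter (fun v => G.dist u v ≠ G.dist w v)).card
        = (F.filter (fun i => P (i, e0))).card + (F.filter (fun i => P (i, e1))).card := by
      rw [hSdef, Finset.card_filter, Finset.sum_product, Finset.card_filter, Finset.card_filter,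
        ← Finset.sum_add_distrib]
      refine Finset.sum_congr rfl (fun i _ => ?_)
      rw [Finset.sum_pair hee]
    rw [hsplit]
    by_cases hud : u.2 = w.2
    · -- same second coordinate; first coordinates differ
      have hac : u.1 ≠ w.1 := fun h => huw (Prod.ext h hud)
      have hac' : (u.1 : ℕ) ≠ (w.1 : ℕ) := fun h => hac (Fin.ext h)
      have key : ∀ e : Fin t, k - 1 ≤ (F.filter (fun i => P (i, e))).card := by
        intro e
        have hone : (F.filter (fun i => ¬ P (i, e))).card ≤ 1 := by
          apply Finset.card_le_one.mpr
          intro i hi j hj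
          simp only [Finset.mem_filter, hP, not_not, hdist] at hi hj
          have h1 := hi.2
          have h2 := hj.2
          apply Fin.ext
          simp only [Nat.dist] at h1 h2
          omega
        have := Finset.card_filter_add_card_filter_not (s := F) (fun i => P (i, e))
        omega
      have h0 := key e0
      have h1 := key e1
      omega
    · -- second coordinates differ: each i works for e0 or e1
      have hsub : F ⊆ (F.filter (fun i => P (i, e0))) ∪ (F.filter (fun i => P (i, e1))) := by
        intro i hi
        rcases Decidable.em (P (i, e0)) with h0 | p0
        · exact Finset.mem_union_left _ (Finset.mem_filter.mpr ⟨hi, h0⟩)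
        rcases Decidable.em (P (i, e1)) with h1 | p1
        · exact Finset.mem_union_right _ (Finset.mem_filter.mpr ⟨hi, h1⟩)
        exfalso
        simp only [hP, not_not, hdist] at p0 p1
        apply hud
        apply Fin.ext
        have hb := u.2.isLt
        have hd := w.2.isLt
        simp only [he0, he1, Nat.dist] at p0 p1
        omega
      calc k = F.card := hF.symm
        _ ≤ ((F.filter (fun i => P (i, e0))) ∪ (F.filter (fun i => P (i, e1)))).card :=
            Finset.card_le_card hsub
        _ ≤ _ := Finset.card_union_le _ _
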